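/- Let A ⊆ B(H) be an operator algebra with contractive approximate identity and M ⊆ B(H,K) a σ-TRO with M* M A ⊆ A. Let Y = closed span of M A, and let (m_i) be a sequence in M with partial sums ∑_{i≤n} m_i m_i* of norm at most 1 and ∑_i m_i m_i* m = m for all m ∈ M. Then for every y ∈ Y, the series ∑_i m_i m_i* y converges in norm to y. -/

import Mathlib

open Filter Topology ContinuousLinearMap

/-- The norm-closed linear span of a set of operators. -/
noncomputable def clspan {H K : Type*} [NormedAddCommGroup H] [InnerProductSpace ℂ H]
    [NormedAddCommGroup K] [InnerProductSpace ℂ K] (S : Set (H →L[ℂ] K)) : Set (H →L[ℂ] K) :=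
  closure ((Submodule.span ℂ S : Submodule ℂ (H →L[ℂ] K)) : Set (H →L[ℂ] K))

/-- Let `A ⊆ B(H)` be an operator algebra with contractive approximate identity,
`M ⊆ B(H,K)` a σ-TRO with `M* M A ⊆ A`, `Y = clspan (M A)`, and `(m i)` a sequence in `M`
with `‖∑_{i<n} mᵢ mᵢ*‖ ≤ 1` and `∑ᵢ mᵢ mᵢ* m = m` for every `m ∈ M`. Then for every `y ∈ Y`
the series `∑ᵢ mᵢ mᵢ* y` converges in norm to `y`. -/
theorem stmt_5 {H K : Type*} [NormedAddCommGroup H] [InnerProductSpace ℂ H] [CompleteSpace H]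
    [NormedAddCommGroup K] [InnerProductSpace ℂ K] [CompleteSpace K]
    (A : Submodule ℂ (H →L[ℂ] H)) (M : Submodule ℂ (H →L[ℂ] K))
    (hAc : IsClosed (A : Set (H →L[ℂ] H))) (hAm : ∀ x ∈ A, ∀ y ∈ A, x ∘L y ∈ A)
    {ι : Type*} [Preorder ι] [IsDirected ι (· ≤ ·)] [Nonempty ι]
    (e : ι → (H →L[ℂ] H)) (he : ∀ i, e i ∈ A) (hen : ∀ i, ‖e i‖ ≤ 1)
    (heL : ∀ x ∈ A, Tendsto (fun i => e i ∘L x) atTop (𝓝 x))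
    (heR : ∀ x ∈ A, Tendsto (fun i => x ∘L e i) atTop (𝓝 x))
    (hMc : IsClosed (M : Set (H →L[ℂ] K)))
    (hMtro : ∀ x ∈ M, ∀ y ∈ M, ∀ z ∈ M, x ∘L (adjoint y ∘L z) ∈ M)
    (hMMA : ∀ x ∈ M, ∀ y ∈ M, ∀ a ∈ A, adjoint x ∘L (y ∘L a) ∈ A)
    (m : ℕ → (H →L[ℂ] K)) (hm : ∀ i, m i ∈ M)
    (hmn : ∀ n, ‖∑ i ∈ Finset.range n, m i ∘L adjoint (m i)‖ ≤ 1)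
    (hms : ∀ x ∈ M, Tendsto (fun n => ∑ i ∈ Finset.range n, (m i ∘L adjoint (m i)) ∘L x)
      atTop (𝓝 x))
    (Y : Set (H →L[ℂ] K))
    (hY : Y = clspan {x : H →L[ℂ] K | ∃ m' ∈ M, ∃ a ∈ A, x = m' ∘L a}) :
    ∀ y ∈ Y, Tendsto (fun n => ∑ i ∈ Finset.range n, (m i ∘L adjoint (m i)) ∘L y)
      atTop (𝓝 y) := by

  intro y hy
  set T : Set (H →L[ℂ] K) := {x : H →L[ℂ] K | ∃ m' ∈ M, ∃ a ∈ A, x = m' ∘L a} with hT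
  set S : ℕ → (K →L[ℂ] K) := fun n => ∑ i ∈ Finset.range n, m i ∘L adjoint (m i) with hS
  have hcomp : ∀ (n : ℕ) (z : H →L[ℂ] K),
      ∑ i ∈ Finset.range n, (m i ∘L adjoint (m i)) ∘L z = S n ∘L z := by
    intro n z
    simp only [hS]
    exact (ContinuousLinearMap.finset_sum_comp _ _).symm
  have hSn : ∀ n, ‖S n‖ ≤ 1 := hmn
  have key : ∀ z ∈ (Submodule.span ℂ T : Submodule ℂ (H →L[ℂ] K)),
      Tendsto (fun n => S n ∘L z) atTop (𝓝 z) := by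
    intro z hz
    induction hz using Submodule.span_induction with
    | mem x hx =>
      obtain ⟨m', hm', a, _, rfl⟩ := hx
      have h1 : Tendsto (fun n => S n ∘L m') atTop (𝓝 m') := by
        have := hms m' hm'
        simpa [hcomp] using this
      have hc : Continuous fun g : H →L[ℂ] K => g ∘L a :=
        ((ContinuousLinearMap.compL ℂ H H K).flip a).continuous
      have := (hc.tendsto m').comp h1
      simpa [Function.comp_def, ContinuousLinearMap.comp_assoc] using this
    | zero => simpa using tendsto_const_nhds
    | add x y _ _ hx hy =>
      have := hx.add hy
      simpa [ContinuousLinearMap.comp_add] using this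
    | smul c x _ hx =>
      have := hx.const_smul c
      simpa [ContinuousLinearMap.comp_smul] using this
  have hclose : y ∈ closure ((Submodule.span ℂ T : Submodule ℂ (H →L[ℂ] K)) :
      Set (H →L[ℂ] K)) := by rwa [hY] at hy
  have main : Tendsto (fun n => S n ∘L y) atTop (𝓝 y) := by
    rw [Metric.tendsto_atTop]
    intro ε hε
    obtain ⟨z, hzmem, hzy⟩ := Metric.mem_closure_iff.mp hclose (ε / 3) (by linarith)
    have hz := key z hzmem
    rw [Metric.tendsto_atTop] at hz
    obtain ⟨N, hN⟩ := hz (ε / 3) (by linarith)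
    refine ⟨N, fun n hn => ?_⟩
    have h1 : ‖S n ∘L (y - z)‖ ≤ ‖y - z‖ := by
      calc ‖S n ∘L (y - z)‖ ≤ ‖S n‖ * ‖y - z‖ := ContinuousLinearMap.opNorm_comp_le _ _
        _ ≤ 1 * ‖y - z‖ := by
            apply mul_le_mul_of_nonneg_right (hSn n) (norm_nonneg _)
        _ = ‖y - z‖ := one_mul _
    have hd : dist y z < ε / 3 := hzy
    rw [dist_eq_norm] at hd ⊢
    have h2 : ‖S n ∘L z - z‖ < ε / 3 := by
      have := hN n hn
      rwa [dist_eq_norm] at this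
    calc ‖S n ∘L y - y‖
        = ‖S n ∘L (y - z) + (S n ∘L z - z) + (z - y)‖ := by
          congr 1
          simp [ContinuousLinearMap.comp_sub]
      _ ≤ ‖S n ∘L (y - z) + (S n ∘L z - z)‖ + ‖z - y‖ := norm_add_le _ _
      _ ≤ ‖S n ∘L (y - z)‖ + ‖S n ∘L z - z‖ + ‖z - y‖ := by
          gcongr; exact norm_add_le _ _
      _ ≤ ‖y - z‖ + ‖S n ∘L z - z‖ + ‖z - y‖ := by gcongr
      _ < ε / 3 + ε / 3 + ε / 3 := by
          have h3 : ‖z - y‖ < ε / 3 := by rwa [norm_sub_rev]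
          gcongr
      _ = ε := by ring
  have : (fun n => ∑ i ∈ Finset.range n, (m i ∘L adjoint (m i)) ∘L y)
      = fun n => S n ∘L y := funext fun n => hcomp n y
  rw [this]
  exact main
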